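/- In the rational Cherednik algebra H_{t,c} of S_n, with τ = x_1·(1 2 ··· n) and λ = (1 2 ··· n)^{-1}·y_1, the following relations hold: τ·u_i = u_{i+1}·τ for i < n, τ·u_n = (u_1 − t)·τ, λ·u_i = u_{i−1}·λ for i > 1, λ·u_1 = (u_n + t)·λ, τ·λ = u_1, λ·τ = u_n + t, and λ·s_1·τ = τ·s_{n−1}·λ + c, where u_i = x_i y_i − c·Σ_{j<i}(ij) are the Dunkl–Opdam elements and s_i = (i, i+1). -/

import Mathlib

/-- Generators of the rational Cherednik algebra `H_{t,c}(S_n, ℂ^n)`: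
the `x_i`, the `y_i`, and the group elements of `S_n`. -/
inductive CherGen (n : ℕ) : Type
  | X : Fin n → CherGen n
  | Y : Fin n → CherGen n
  | G : Equiv.Perm (Fin n) → CherGen n

noncomputable def xF (n : ℕ) (i : Fin n) : FreeAlgebra ℂ (CherGen n) :=
  FreeAlgebra.ι ℂ (CherGen.X i)

noncomputable def yF (n : ℕ) (i : Fin n) : FreeAlgebra ℂ (CherGen n) :=
  FreeAlgebra.ι ℂ (CherGen.Y i)

noncomputable def gF (n : ℕ) (w : Equiv.Perm (Fin n)) : FreeAlgebra ℂ (CherGen n) :=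
  FreeAlgebra.ι ℂ (CherGen.G w)

/-- The defining relations of the rational Cherednik algebra `H_{t,c}(S_n, ℂ^n)`:
`S_n` group relations, the semidirect-product relations, commutativity of the
`x`'s and of the `y`'s, and `[y_i, x_j] = c·(ij)` for `i ≠ j`,
`[y_i, x_i] = t − c·∑_{j ≠ i} (ij)`. -/
inductive CherRel (n : ℕ) (t c : ℂ) :
    FreeAlgebra ℂ (CherGen n) → FreeAlgebra ℂ (CherGen n) → Prop
  | gmul (w w' : Equiv.Perm (Fin n)) : CherRel n t c (gF n w * gF n w') (gF n (w * w'))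
  | gone : CherRel n t c (gF n 1) 1
  | xx (i j : Fin n) : CherRel n t c (xF n i * xF n j) (xF n j * xF n i)
  | yy (i j : Fin n) : CherRel n t c (yF n i * yF n j) (yF n j * yF n i)
  | gx (w : Equiv.Perm (Fin n)) (i : Fin n) :
      CherRel n t c (gF n w * xF n i) (xF n (w i) * gF n w)
  | gy (w : Equiv.Perm (Fin n)) (i : Fin n) :
      CherRel n t c (gF n w * yF n i) (yF n (w i) * gF n w)
  | yx (i j : Fin n) (h : i ≠ j) :
      CherRel n t c (yF n i * xF n j) (xF n j * yF n i + c • gF n (Equiv.swap i j))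
  | yxd (i : Fin n) :
      CherRel n t c (yF n i * xF n i)
        (xF n i * yF n i + t • (1 : FreeAlgebra ℂ (CherGen n))
          - c • ∑ j ∈ Finset.univ.erase i, gF n (Equiv.swap i j))

/-- The rational Cherednik algebra `H_{t,c}(S_n, ℂ^n)`. -/
noncomputable abbrev Cher (n : ℕ) (t c : ℂ) := RingQuot (CherRel n t c)

noncomputable def xC (n : ℕ) (t c : ℂ) (i : Fin n) : Cher n t c :=
  RingQuot.mkAlgHom ℂ (CherRel n t c) (xF n i)

noncomputable def yC (n : ℕ) (t c : ℂ) (i : Fin n) : Cher n t c :=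
  RingQuot.mkAlgHom ℂ (CherRel n t c) (yF n i)

noncomputable def gC (n : ℕ) (t c : ℂ) (w : Equiv.Perm (Fin n)) : Cher n t c :=
  RingQuot.mkAlgHom ℂ (CherRel n t c) (gF n w)

/-- The Dunkl–Opdam element `u_i = x_i y_i − c·∑_{j < i} (ji)`. -/
noncomputable def uC (n : ℕ) (t c : ℂ) (i : Fin n) : Cher n t c :=
  xC n t c i * yC n t c i -
    c • ∑ j ∈ Finset.univ.filter (fun j => j < i), gC n t c (Equiv.swap j i)


/-- The shift operator `τ = x_1·(1 2 ⋯ n)`, where `(1 2 ⋯ n)` is the `n`-cycle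
`i ↦ i + 1`. -/
noncomputable def tauC (n : ℕ) [NeZero n] (t c : ℂ) : Cher n t c :=
  xC n t c 0 * gC n t c (Equiv.addRight (1 : Fin n))

/-- The shift operator `λ = (1 2 ⋯ n)⁻¹·y_1`. -/
noncomputable def lamC (n : ℕ) [NeZero n] (t c : ℂ) : Cher n t c :=
  gC n t c (Equiv.addRight (1 : Fin n))⁻¹ * yC n t c 0

namespace CherAux
open Finset Equiv

variable {n : ℕ} {t c : ℂ}

local notation "π" => RingQuot.mkAlgHom ℂ (CherRel n t c)

lemma rel_eq {a b : FreeAlgebra ℂ (CherGen n)} (h : CherRel n t c a b) : π a = π b :=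
  RingQuot.mkAlgHom_rel ℂ h

lemma gg (w w' : Equiv.Perm (Fin n)) :
    gC n t c w * gC n t c w' = gC n t c (w * w') := by
  rw [gC, gC, gC, ← map_mul]; exact rel_eq (CherRel.gmul w w')

lemma g1 : gC n t c 1 = 1 := by
  rw [gC]; simpa using rel_eq (t := t) (c := c) (CherRel.gone (n := n))

lemma gx (w : Equiv.Perm (Fin n)) (i : Fin n) :
    gC n t c w * xC n t c i = xC n t c (w i) * gC n t c w := by
  rw [gC, xC, xC, ← map_mul, ← map_mul]; exact rel_eq (CherRel.gx w i)

lemma gy (w : Equiv.Perm (Fin n)) (i : Fin n) :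
    gC n t c w * yC n t c i = yC n t c (w i) * gC n t c w := by
  rw [gC, yC, yC, ← map_mul, ← map_mul]; exact rel_eq (CherRel.gy w i)

lemma xx (i j : Fin n) : xC n t c i * xC n t c j = xC n t c j * xC n t c i := by
  rw [xC, xC, ← map_mul, ← map_mul]; exact rel_eq (CherRel.xx i j)

lemma yy (i j : Fin n) : yC n t c i * yC n t c j = yC n t c j * yC n t c i := by
  rw [yC, yC, ← map_mul, ← map_mul]; exact rel_eq (CherRel.yy i j)

lemma yx (i j : Fin n) (h : i ≠ j) :
    yC n t c i * xC n t c j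
      = xC n t c j * yC n t c i + c • gC n t c (Equiv.swap i j) := by
  rw [yC, xC, gC, ← map_mul, ← map_mul, rel_eq (CherRel.yx i j h), map_add, map_smul]

lemma yxd (i : Fin n) :
    yC n t c i * xC n t c i
      = xC n t c i * yC n t c i + t • 1
        - c • ∑ j ∈ Finset.univ.erase i, gC n t c (Equiv.swap i j) := by
  rw [yC, xC, ← map_mul, ← map_mul, rel_eq (CherRel.yxd i), map_sub, map_add, map_smul,
    map_smul, map_one, map_sum]
  rfl

/- primed (continuation) versions -/

lemma gx' (w : Equiv.Perm (Fin n)) (i : Fin n) (a : Cher n t c) :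
    gC n t c w * (xC n t c i * a) = xC n t c (w i) * (gC n t c w * a) := by
  rw [← mul_assoc, gx, mul_assoc]

lemma gy' (w : Equiv.Perm (Fin n)) (i : Fin n) (a : Cher n t c) :
    gC n t c w * (yC n t c i * a) = yC n t c (w i) * (gC n t c w * a) := by
  rw [← mul_assoc, gy, mul_assoc]

lemma gg' (w w' : Equiv.Perm (Fin n)) (a : Cher n t c) :
    gC n t c w * (gC n t c w' * a) = gC n t c (w * w') * a := by
  rw [← mul_assoc, gg]

lemma xx' (i j : Fin n) (a : Cher n t c) :
    xC n t c i * (xC n t c j * a) = xC n t c j * (xC n t c i * a) := by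
  rw [← mul_assoc, xx, mul_assoc]

lemma yx' (i j : Fin n) (h : i ≠ j) (a : Cher n t c) :
    yC n t c i * (xC n t c j * a)
      = xC n t c j * (yC n t c i * a) + c • (gC n t c (Equiv.swap i j) * a) := by
  rw [← mul_assoc, yx i j h, add_mul, mul_assoc, smul_mul_assoc]

lemma yxd' (i : Fin n) (a : Cher n t c) :
    yC n t c i * (xC n t c i * a)
      = xC n t c i * (yC n t c i * a) + t • a
        - c • ((∑ j ∈ Finset.univ.erase i, gC n t c (Equiv.swap i j)) * a) := by
  rw [← mul_assoc, yxd, sub_mul, add_mul, mul_assoc, smul_mul_assoc, one_mul, smul_mul_assoc]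

lemma g_swap (w : Equiv.Perm (Fin n)) (a b : Fin n) :
    gC n t c w * gC n t c (Equiv.swap a b)
      = gC n t c (Equiv.swap (w a) (w b)) * gC n t c w := by
  rw [gg, Equiv.mul_swap_eq_swap_mul, ← gg]

lemma g_swap' (w : Equiv.Perm (Fin n)) (a b : Fin n) (u : Cher n t c) :
    gC n t c w * (gC n t c (Equiv.swap a b) * u)
      = gC n t c (Equiv.swap (w a) (w b)) * (gC n t c w * u) := by
  rw [← mul_assoc, g_swap, mul_assoc]

/- Fin helpers -/

lemma val_pos_of_ne [NeZero n] {i : Fin n} (h : i ≠ 0) : 0 < i.val := by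
  have : i.val ≠ 0 := fun h' => h (Fin.ext (by rw [h', Fin.val_zero]))
  omega

lemma val_add_one_of_lt [NeZero n] {i : Fin n} (h : i.val + 1 < n) : (i+1).val = i.val + 1 := by
  have hn : 1 % n = 1 := Nat.mod_eq_of_lt (by omega)
  have h2 : (i + 1 : Fin n).val = (i.val + 1 % n) % n := by rw [Fin.add_def, Fin.val_one']
  rw [h2, hn, Nat.mod_eq_of_lt h]

lemma val_sub_one [NeZero n] {i : Fin n} (h : i ≠ 0) : (i-1).val = i.val - 1 := by
  have h1 : 0 < i.val := val_pos_of_ne h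
  have h2 := i.isLt
  have hn : 1 % n = 1 := Nat.mod_eq_of_lt (by omega)
  have key : (i - 1 : Fin n).val = (n - 1 % n + i.val) % n := by rw [Fin.sub_def]; simp [Fin.val_one']
  rw [key, hn]
  have h3 : n - 1 + i.val = (i.val - 1) + n := by omega
  rw [h3, Nat.add_mod_right, Nat.mod_eq_of_lt (by omega)]

lemma neg_one_val [NeZero n] : ((-1 : Fin n)).val = n - 1 := by
  obtain ⟨m, rfl⟩ := Nat.exists_eq_succ_of_ne_zero (NeZero.ne n)
  exact Fin.coe_neg_one

lemma lt_neg_one_iff [NeZero n] {a : Fin n} : a < -1 ↔ a ≠ -1 := by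
  rw [Fin.lt_iff_val_lt_val, Ne, Fin.ext_iff, neg_one_val]
  have := a.isLt
  omega

lemma sig_apply [NeZero n] (j : Fin n) : (Equiv.addRight (1 : Fin n)) j = j + 1 := rfl

lemma sig_inv_apply [NeZero n] (j : Fin n) : (Equiv.addRight (1 : Fin n))⁻¹ j = j - 1 := by
  simp [Equiv.Perm.inv_def, sub_eq_add_neg]

/- reindexing lemmas -/

lemma R_wrap [NeZero n] (f : Fin n → Cher n t c) :
    ∑ j ∈ Finset.univ.filter (fun j => j < (-1 : Fin n)), f (j + 1)
      = ∑ k ∈ Finset.univ.erase 0, f k := by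
  apply Finset.sum_equiv (Equiv.addRight (1 : Fin n))
  · intro j
    simp only [Finset.mem_filter, Finset.mem_erase, Finset.mem_univ, true_and, and_true,
      Equiv.coe_addRight, lt_neg_one_iff, Ne]
    rw [add_eq_zero_iff_eq_neg]
  · intro j _; rfl

lemma R_wrap' [NeZero n] (f : Fin n → Cher n t c) :
    ∑ j ∈ Finset.univ.erase (0 : Fin n), f (j - 1)
      = ∑ k ∈ Finset.univ.filter (fun k => k < (-1 : Fin n)), f k := by
  rw [← R_wrap (t := t) (c := c) (fun k => f (k - 1))]
  exact Finset.sum_congr rfl fun j _ => by rw [add_sub_cancel_right]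

lemma R_A [NeZero n] {i : Fin n} (h : i.val + 1 < n) (f : Fin n → Cher n t c) :
    ∑ j ∈ Finset.univ.filter (fun j => j < i), f (j + 1)
      = ∑ k ∈ (Finset.univ.filter (fun k => k < i + 1)).erase 0, f k := by
  have hi1 : (i + 1 : Fin n).val = i.val + 1 := val_add_one_of_lt h
  apply Finset.sum_equiv (Equiv.addRight (1 : Fin n))
  · intro j
    have hj := j.isLt
    have hadd : (j + 1 : Fin n).val = (j.val + 1 % n) % n := by rw [Fin.add_def, Fin.val_one']
    have hn : 1 % n = 1 := Nat.mod_eq_of_lt (by omega)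
    rw [hn] at hadd
    simp only [Finset.mem_filter, Finset.mem_erase, Finset.mem_univ, true_and,
      Equiv.coe_addRight, Fin.lt_iff_val_lt_val, Ne, Fin.ext_iff, Fin.val_zero, hi1, hadd]
    by_cases hc : j.val + 1 = n
    · rw [hc, Nat.mod_self]; omega
    · rw [Nat.mod_eq_of_lt (by omega)]; omega
  · intro j _; rfl

lemma R_C [NeZero n] {i : Fin n} (h : i ≠ 0) (f : Fin n → Cher n t c) :
    ∑ j ∈ (Finset.univ.filter (fun j => j < i)).erase 0, f (j - 1)
      = ∑ k ∈ Finset.univ.filter (fun k => k < i - 1), f k := by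
  have h1 : (i - 1 : Fin n).val + 1 < n := by
    have := val_sub_one h; have := i.isLt; have := val_pos_of_ne h; omega
  have h2 := R_A h1 (fun k => f (k - 1))
  rw [sub_add_cancel] at h2
  rw [← h2]
  exact Finset.sum_congr rfl fun j _ => by rw [add_sub_cancel_right]

end CherAux

namespace CherAux
open Finset Equiv

variable {n : ℕ} [NeZero n] {t c : ℂ}

lemma stmt5 : tauC n t c * lamC n t c = uC n t c 0 := by
  have he : Finset.univ.filter (fun j => j < (0 : Fin n)) = ∅ := by
    simp [Finset.filter_eq_empty_iff]
  rw [tauC, lamC, uC, he, Finset.sum_empty, smul_zero, sub_zero,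
    mul_assoc, gg', mul_inv_cancel, g1, one_mul]

lemma conj_inv_swap0 (j : Fin n) :
    (Equiv.addRight (1 : Fin n))⁻¹ * (Equiv.swap 0 j * (Equiv.addRight (1 : Fin n)))
      = Equiv.swap (j - 1) (-1) := by
  rw [← mul_assoc, Equiv.mul_swap_eq_swap_mul, mul_assoc, inv_mul_cancel, mul_one,
    sig_inv_apply, sig_inv_apply, zero_sub, Equiv.swap_comm]

lemma conj_inv_swap0' (j : Fin n) :
    (Equiv.addRight (1 : Fin n))⁻¹ * Equiv.swap 0 j
      = Equiv.swap (j - 1) (-1) * (Equiv.addRight (1 : Fin n))⁻¹ := by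
  rw [Equiv.mul_swap_eq_swap_mul, sig_inv_apply, sig_inv_apply, zero_sub, Equiv.swap_comm]

lemma conj_inv_swap (j i : Fin n) :
    (Equiv.addRight (1 : Fin n))⁻¹ * Equiv.swap j i
      = Equiv.swap (j - 1) (i - 1) * (Equiv.addRight (1 : Fin n))⁻¹ := by
  rw [Equiv.mul_swap_eq_swap_mul, sig_inv_apply, sig_inv_apply]

lemma stmt6 : lamC n t c * tauC n t c = uC n t c (-1) + t • 1 := by
  rw [lamC, tauC]
  simp only [mul_assoc]
  rw [yxd' 0]
  simp only [mul_sub, mul_add, mul_smul_comm, Finset.sum_mul, Finset.mul_sum,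
    gx', gy', gg', gg, inv_mul_cancel, g1, one_mul, mul_one, conj_inv_swap0,
    sig_inv_apply, zero_sub]
  rw [R_wrap' (fun k => gC n t c (Equiv.swap k (-1))), uC]
  abel

lemma stmt2 : tauC n t c * uC n t c (-1) = (uC n t c 0 - t • 1) * tauC n t c := by
  have he : Finset.univ.filter (fun j => j < (0 : Fin n)) = ∅ := by
    simp [Finset.filter_eq_empty_iff]
  rw [tauC, uC, uC, he, Finset.sum_empty, smul_zero, sub_zero]
  have h1 : gC n t c (Equiv.addRight (1 : Fin n)) * (xC n t c (-1) * yC n t c (-1))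
      = xC n t c 0 * (yC n t c 0 * gC n t c (Equiv.addRight (1 : Fin n))) := by
    rw [gx', gy]
    simp only [sig_apply, neg_add_cancel]
  have h2 : ∀ j ∈ Finset.univ.filter (fun j => j < (-1 : Fin n)),
      xC n t c 0 * (gC n t c (Equiv.addRight (1 : Fin n)) * gC n t c (Equiv.swap j (-1)))
      = xC n t c 0 * (gC n t c (Equiv.swap 0 (j + 1)) * gC n t c (Equiv.addRight (1 : Fin n))) := by
    intro j _
    rw [g_swap]
    simp only [sig_apply, neg_add_cancel]
    rw [Equiv.swap_comm]
  simp only [mul_sub, sub_mul, mul_add, add_mul, smul_add, mul_smul_comm, smul_mul_assoc,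
    Finset.mul_sum, Finset.sum_mul, mul_assoc, one_mul, mul_one]
  rw [h1, yxd' 0]
  simp only [mul_sub, mul_add, mul_smul_comm, Finset.mul_sum, Finset.sum_mul, mul_assoc]
  rw [Finset.sum_congr rfl h2,
    R_wrap (fun k => xC n t c 0 * (gC n t c (Equiv.swap 0 k) * gC n t c (Equiv.addRight (1 : Fin n))))]
  module

lemma stmt1 (i : Fin n) (h : (i : ℕ) + 1 < n) :
    tauC n t c * uC n t c i = uC n t c (i + 1) * tauC n t c := by
  have hi0 : i + 1 ≠ (0 : Fin n) := by
    rw [Ne, Fin.ext_iff, val_add_one_of_lt h]; simp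
  have h0mem : (0 : Fin n) ∈ Finset.univ.filter (fun k => k < i + 1) := by
    simp only [Finset.mem_filter, Finset.mem_univ, true_and, Fin.lt_iff_val_lt_val,
      Fin.val_zero, val_add_one_of_lt h]
    omega
  rw [tauC, uC, uC, ← Finset.add_sum_erase _ _ h0mem]
  have h1 : gC n t c (Equiv.addRight (1 : Fin n)) * (xC n t c i * yC n t c i)
      = xC n t c (i + 1) * (yC n t c (i + 1) * gC n t c (Equiv.addRight (1 : Fin n))) := by
    rw [gx', gy]
    simp only [sig_apply]
  have h2 : ∀ j ∈ Finset.univ.filter (fun j => j < i),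
      xC n t c 0 * (gC n t c (Equiv.addRight (1 : Fin n)) * gC n t c (Equiv.swap j i))
      = xC n t c 0 * (gC n t c (Equiv.swap (j + 1) (i + 1)) * gC n t c (Equiv.addRight (1 : Fin n))) := by
    intro j _
    rw [g_swap]
    simp only [sig_apply]
  simp only [mul_sub, sub_mul, mul_add, add_mul, smul_add, mul_smul_comm, smul_mul_assoc,
    Finset.mul_sum, Finset.sum_mul, mul_assoc, one_mul, mul_one]
  rw [h1, Finset.sum_congr rfl h2,
    R_A h (fun k => xC n t c 0 * (gC n t c (Equiv.swap k (i + 1)) * gC n t c (Equiv.addRight (1 : Fin n)))),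
    yx' (i + 1) 0 hi0]
  simp only [mul_add, mul_smul_comm, mul_assoc]
  rw [xx' (i + 1) 0, gx' (Equiv.swap 0 (i + 1)) 0, Equiv.swap_apply_left,
    Equiv.swap_comm (i + 1) 0]
  have h6 : ∀ k ∈ (Finset.univ.filter (fun k => k < i + 1)).erase 0,
      gC n t c (Equiv.swap k (i + 1)) * (xC n t c 0 * gC n t c (Equiv.addRight (1 : Fin n)))
      = xC n t c 0 * (gC n t c (Equiv.swap k (i + 1)) * gC n t c (Equiv.addRight (1 : Fin n))) := by
    intro k hk
    obtain ⟨hk0, _⟩ := Finset.mem_erase.mp hk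
    rw [gx', Equiv.swap_apply_of_ne_of_ne (Ne.symm hk0) (Ne.symm hi0)]
  rw [Finset.sum_congr rfl h6]
  module

lemma stmt4 : lamC n t c * uC n t c 0 = (uC n t c (-1) + t • 1) * lamC n t c := by
  have he : Finset.univ.filter (fun j => j < (0 : Fin n)) = ∅ := by
    simp [Finset.filter_eq_empty_iff]
  rw [lamC, uC, uC, he, Finset.sum_empty, smul_zero, sub_zero]
  simp only [mul_assoc]
  rw [yxd' 0]
  have h1 : gC n t c (Equiv.addRight (1 : Fin n))⁻¹ * (xC n t c 0 * (yC n t c 0 * yC n t c 0))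
      = xC n t c (-1) * (yC n t c (-1) * (gC n t c (Equiv.addRight (1 : Fin n))⁻¹ * yC n t c 0)) := by
    rw [gx', gy']
    simp only [sig_inv_apply, zero_sub]
  have h2 : ∀ j ∈ Finset.univ.erase (0 : Fin n),
      gC n t c (Equiv.addRight (1 : Fin n))⁻¹ * (gC n t c (Equiv.swap 0 j) * yC n t c 0)
      = gC n t c (Equiv.swap (j - 1) (-1)) * (gC n t c (Equiv.addRight (1 : Fin n))⁻¹ * yC n t c 0) := by
    intro j _
    rw [gg', conj_inv_swap0', ← gg']
  simp only [mul_sub, sub_mul, mul_add, add_mul, smul_add, mul_smul_comm, smul_mul_assoc,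
    Finset.mul_sum, Finset.sum_mul, mul_assoc, one_mul, mul_one]
  rw [h1, Finset.sum_congr rfl h2,
    R_wrap' (fun k => gC n t c (Equiv.swap k (-1)) * (gC n t c (Equiv.addRight (1 : Fin n))⁻¹ * yC n t c 0))]
  module

lemma stmt3 (i : Fin n) (h : 0 < (i : ℕ)) :
    lamC n t c * uC n t c i = uC n t c (i - 1) * lamC n t c := by
  have hi0 : i ≠ 0 := by
    rw [Ne, Fin.ext_iff, Fin.val_zero]; omega
  have h0mem : (0 : Fin n) ∈ Finset.univ.filter (fun j => j < i) := by
    simp only [Finset.mem_filter, Finset.mem_univ, true_and, Fin.lt_iff_val_lt_val,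
      Fin.val_zero]
    omega
  rw [lamC, uC, uC, ← Finset.add_sum_erase _ _ h0mem]
  simp only [mul_assoc]
  have h1 : yC n t c 0 * (xC n t c i * yC n t c i)
      = xC n t c i * (yC n t c i * yC n t c 0)
        + c • (yC n t c 0 * gC n t c (Equiv.swap 0 i)) := by
    rw [yx' 0 i (Ne.symm hi0), yy 0 i, gy, Equiv.swap_apply_right]
  have h2 : gC n t c (Equiv.addRight (1 : Fin n))⁻¹ * (xC n t c i * (yC n t c i * yC n t c 0))
      = xC n t c (i - 1) * (yC n t c (i - 1) * (gC n t c (Equiv.addRight (1 : Fin n))⁻¹ * yC n t c 0)) := by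
    rw [gx', gy']
    simp only [sig_inv_apply]
  have h3 : ∀ j ∈ (Finset.univ.filter (fun j => j < i)).erase 0,
      gC n t c (Equiv.addRight (1 : Fin n))⁻¹ * (yC n t c 0 * gC n t c (Equiv.swap j i))
      = gC n t c (Equiv.swap (j - 1) (i - 1))
          * (gC n t c (Equiv.addRight (1 : Fin n))⁻¹ * yC n t c 0) := by
    intro j hj
    obtain ⟨hj0, _⟩ := Finset.mem_erase.mp hj
    have hy : gC n t c (Equiv.swap j i) * yC n t c 0 = yC n t c 0 * gC n t c (Equiv.swap j i) := by
      rw [gy, Equiv.swap_apply_of_ne_of_ne (Ne.symm hj0) (Ne.symm hi0)]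
    rw [← hy, gg', conj_inv_swap, ← gg']
  simp only [mul_sub, sub_mul, mul_add, add_mul, smul_add, mul_smul_comm, smul_mul_assoc,
    Finset.mul_sum, Finset.sum_mul, mul_assoc, one_mul, mul_one]
  rw [h1]
  simp only [mul_add, mul_smul_comm, mul_assoc]
  rw [h2, Finset.sum_congr rfl h3,
    R_C hi0 (fun k => gC n t c (Equiv.swap k (i - 1))
      * (gC n t c (Equiv.addRight (1 : Fin n))⁻¹ * yC n t c 0))]
  module

lemma stmt7 (hn : 2 ≤ n) :
    lamC n t c * gC n t c (Equiv.swap 0 1) * tauC n t c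
      = tauC n t c * gC n t c (Equiv.swap (-2) (-1)) * lamC n t c + c • 1 := by
  have h10 : (1 : Fin n) ≠ 0 := by
    rw [Ne, Fin.ext_iff, Fin.val_one', Fin.val_zero, Nat.mod_eq_of_lt (by omega)]
    omega
  have hm2 : (-2 : Fin n) + 1 = -1 := by open Fin.CommRing in ring
  have hm1 : (-1 : Fin n) + 1 = 0 := by open Fin.CommRing in ring
  rw [lamC, tauC]
  simp only [mul_assoc]
  have h1 : gC n t c (Equiv.swap 0 1)
        * (yC n t c 1 * (xC n t c 0 * gC n t c (Equiv.addRight (1 : Fin n))))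
      = yC n t c 0 * (gC n t c (Equiv.swap 0 1)
        * (xC n t c 0 * gC n t c (Equiv.addRight (1 : Fin n)))) := by
    rw [gy', Equiv.swap_apply_right]
  rw [← h1, yx' 1 0 h10]
  simp only [mul_add, mul_smul_comm, mul_assoc]
  have p1 : (Equiv.addRight (1 : Fin n))⁻¹
      * (Equiv.swap 0 1 * (Equiv.swap 1 0 * Equiv.addRight (1 : Fin n))) = 1 := by
    rw [Equiv.swap_comm 1 0, ← mul_assoc (Equiv.swap 0 1), Equiv.swap_mul_self, one_mul, inv_mul_cancel]
  have p2 : (Equiv.addRight (1 : Fin n))⁻¹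
      * (Equiv.swap 0 1 * Equiv.addRight (1 : Fin n)) = Equiv.swap (-1) 0 := by
    rw [← mul_assoc, Equiv.mul_swap_eq_swap_mul, mul_assoc, inv_mul_cancel, mul_one,
      sig_inv_apply, sig_inv_apply, zero_sub, sub_self]
  have p3 : Equiv.addRight (1 : Fin n)
      * (Equiv.swap (-2) (-1) * (Equiv.addRight (1 : Fin n))⁻¹) = Equiv.swap (-1) 0 := by
    rw [← mul_assoc, Equiv.mul_swap_eq_swap_mul, mul_assoc, mul_inv_cancel, mul_one,
      sig_apply, sig_apply, hm2, hm1]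
  simp only [gg', gg, gx', gy', gy, mul_assoc, Equiv.Perm.mul_apply,
    Equiv.swap_apply_left, Equiv.swap_apply_right, sig_inv_apply, sig_apply,
    zero_sub, sub_self, hm1, hm2, p1, p2, p3, g1, mul_one, one_mul]

end CherAux

/-- the relations between `τ`, `λ`, the Dunkl–Opdam elements and
the simple transpositions in `H_{t,c}(S_n, ℂ^n)`:
`τ u_i = u_{i+1} τ` (`i < n`), `τ u_n = (u_1 − t) τ`,
`λ u_i = u_{i−1} λ` (`i > 1`), `λ u_1 = (u_n + t) λ`,
`τ λ = u_1`, `λ τ = u_n + t`, and `λ s_1 τ = τ s_{n−1} λ + c`.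
(In 0-based indexing, `u_n` is `uC n t c (-1)` and `s_{n−1}` swaps `-2` and `-1`.) -/
theorem stmt_17 (n : ℕ) [NeZero n] (hn : 2 ≤ n) (t c : ℂ) :
    (∀ i : Fin n, (i : ℕ) + 1 < n →
      tauC n t c * uC n t c i = uC n t c (i + 1) * tauC n t c) ∧
    (tauC n t c * uC n t c (-1) = (uC n t c 0 - t • 1) * tauC n t c) ∧
    (∀ i : Fin n, 0 < (i : ℕ) →
      lamC n t c * uC n t c i = uC n t c (i - 1) * lamC n t c) ∧
    (lamC n t c * uC n t c 0 = (uC n t c (-1) + t • 1) * lamC n t c) ∧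
    (tauC n t c * lamC n t c = uC n t c 0) ∧
    (lamC n t c * tauC n t c = uC n t c (-1) + t • 1) ∧
    (lamC n t c * gC n t c (Equiv.swap 0 1) * tauC n t c
      = tauC n t c * gC n t c (Equiv.swap (-2) (-1)) * lamC n t c + c • 1) := by
  exact ⟨fun i hi => CherAux.stmt1 i hi, CherAux.stmt2, fun i hi => CherAux.stmt3 i hi,
    CherAux.stmt4, CherAux.stmt5, CherAux.stmt6, CherAux.stmt7 hn⟩
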